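/- Let ψ be an index function, extended by −∞ on (−∞,0), with convex conjugate (−ψ)*(s) := sup_{t ≥ 0}(s·t + ψ(t)). Let α, c₁, c₂, C₃ > 0 and d, err, res ≥ 0, set c̃₁ := c₁/C₃, and assume (−ψ)*(−c̃₁/α) and (−ψ)*(−c̃₁/(2α)) are finite. If c₁·res + c₂·α·err ≤ d + α·ψ(C₃·res), then err ≤ (1/c₂)·(d/α + (−ψ)*(−c̃₁/α)) and res ≤ (2/c₁)·(d + α·(−ψ)*(−c̃₁/(2α))). -/

import Mathlib

/-- The convex conjugate of `-ψ`, where the index function `ψ : [0,∞) → [0,∞)` is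
extended by `-∞` on `(-∞,0)`:  `(-ψ)*(s) = sup_{t ≥ 0} (s·t + ψ(t)) ∈ [0,∞]`. -/
noncomputable def negConj (ψ : ℝ → ℝ) (s : ℝ) : EReal :=
  ⨆ t : {t : ℝ // 0 ≤ t}, ((s * t.1 + ψ t.1 : ℝ) : EReal)

lemma negConj_aux (ψ : ℝ → ℝ) (s t : ℝ) (ht : 0 ≤ t)
    (hfin : negConj ψ s ≠ ⊤) : s * t + ψ t ≤ (negConj ψ s).toReal := by
  have h1 : ((s * t + ψ t : ℝ) : EReal) ≤ negConj ψ s :=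
    le_iSup (fun u : {u : ℝ // 0 ≤ u} => ((s * u.1 + ψ u.1 : ℝ) : EReal)) ⟨t, ht⟩
  have hbot : negConj ψ s ≠ ⊥ :=
    fun h => (EReal.coe_ne_bot (s * t + ψ t)) (le_bot_iff.mp (h ▸ h1))
  have := EReal.toReal_le_toReal h1 (EReal.coe_ne_bot _) hfin
  simpa only [EReal.toReal_coe] using this

theorem stmt_0 (ψ : ℝ → ℝ)
    (hψcont : ContinuousOn ψ (Set.Ici (0 : ℝ)))
    (hψmono : MonotoneOn ψ (Set.Ici (0 : ℝ)))
    (hψ0 : ψ 0 = 0) (hψnn : ∀ t : ℝ, 0 ≤ t → 0 ≤ ψ t)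
    (α c₁ c₂ C₃ d err res : ℝ)
    (hα : 0 < α) (hc₁ : 0 < c₁) (hc₂ : 0 < c₂) (hC₃ : 0 < C₃)
    (hd : 0 ≤ d) (herr : 0 ≤ err) (hres : 0 ≤ res)
    (hfin1 : negConj ψ (-(c₁ / C₃) / α) ≠ ⊤)
    (hfin2 : negConj ψ (-(c₁ / C₃) / (2 * α)) ≠ ⊤)
    (hmain : c₁ * res + c₂ * α * err ≤ d + α * ψ (C₃ * res)) :
    err ≤ (1 / c₂) * (d / α + (negConj ψ (-(c₁ / C₃) / α)).toReal) ∧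
      res ≤ (2 / c₁) * (d + α * (negConj ψ (-(c₁ / C₃) / (2 * α))).toReal) := by
  have htC : 0 ≤ C₃ * res := by positivity
  set B₁ := (negConj ψ (-(c₁ / C₃) / α)).toReal with hB₁def
  set B₂ := (negConj ψ (-(c₁ / C₃) / (2 * α))).toReal with hB₂def
  have hB1 := negConj_aux ψ (-(c₁ / C₃) / α) (C₃ * res) htC hfin1
  have hB2 := negConj_aux ψ (-(c₁ / C₃) / (2 * α)) (C₃ * res) htC hfin2
  rw [← hB₁def] at hB1
  rw [← hB₂def] at hB2
  have s1 : -(c₁ / C₃) / α * (C₃ * res) = -(c₁ * res) / α := by field_simp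
  have s2 : -(c₁ / C₃) / (2 * α) * (C₃ * res) = -(c₁ * res) / (2 * α) := by
    field_simp
  rw [s1] at hB1
  rw [s2] at hB2
  -- multiply by α
  have hB1α : -(c₁ * res) + α * ψ (C₃ * res) ≤ α * B₁ := by
    have := mul_le_mul_of_nonneg_left hB1 hα.le
    have e : α * (-(c₁ * res) / α + ψ (C₃ * res)) = -(c₁ * res) + α * ψ (C₃ * res) := by
      field_simp
    linarith [e ▸ this]
  have hB2α : -(c₁ * res) / 2 + α * ψ (C₃ * res) ≤ α * B₂ := by
    have := mul_le_mul_of_nonneg_left hB2 hα.le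
    have e : α * (-(c₁ * res) / (2 * α) + ψ (C₃ * res))
        = -(c₁ * res) / 2 + α * ψ (C₃ * res) := by field_simp
    linarith [e ▸ this]
  constructor
  · have e1 : err * c₂ ≤ (d + α * B₁) / α := by
      rw [le_div_iff₀ hα]; nlinarith
    have h2 : (d + α * B₁) / α = d / α + B₁ := by field_simp
    rw [div_mul_eq_mul_div, one_mul, le_div_iff₀ hc₂]
    linarith
  · rw [div_mul_eq_mul_div, le_div_iff₀ hc₁]
    nlinarith [mul_nonneg (mul_nonneg hc₂.le hα.le) herr]
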